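/- Let p(z) = ∑_{k=0}^N a_k z^k be a complex polynomial of degree N with leading coefficient a_N ≠ 0 and simple roots z_1,…,z_N ∈ ℂ, and let ẑ_i be the stereographic projections of z_i onto the Riemann sphere. Then V(ẑ_1,…,ẑ_N) = (N−1)∑_{i=1}^N log√(1+|z_i|²) − (1/2)∑_{i=1}^N log|p'(z_i)| + (N/2)·log|a_N|, where V is the logarithmic energy. -/

import Mathlib

open Finset Polynomial

/-- Stereographic projection of `z ∈ ℂ` onto the Riemann sphere
(the sphere of radius 1/2 centered at (0,0,1/2)). -/
noncomputable def riemannProj (z : ℂ) : EuclideanSpace ℝ (Fin 3) :=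
  WithLp.toLp 2 ![z.re / (1 + ‖z‖ ^ 2), z.im / (1 + ‖z‖ ^ 2),
    ‖z‖ ^ 2 / (1 + ‖z‖ ^ 2)]

/-- Logarithmic energy of a configuration of points in ℝ³. -/
noncomputable def logEnergy {N : ℕ} (x : Fin N → EuclideanSpace ℝ (Fin 3)) : ℝ :=
  -∑ p ∈ Finset.univ.filter (fun p : Fin N × Fin N => p.1 < p.2),
      Real.log ‖x p.1 - x p.2‖

lemma riemannProj_dist (z w : ℂ) :
    ‖riemannProj z - riemannProj w‖ = ‖z - w‖ /
      (Real.sqrt (1 + ‖z‖ ^ 2) * Real.sqrt (1 + ‖w‖ ^ 2)) := by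
  have hA : (0:ℝ) < 1 + ‖z‖ ^ 2 := by positivity
  have hB : (0:ℝ) < 1 + ‖w‖ ^ 2 := by positivity
  have key : ∀ i : Fin 3, (riemannProj z - riemannProj w) i =
      riemannProj z i - riemannProj w i := fun i => rfl
  rw [EuclideanSpace.norm_eq]
  simp only [key, Fin.sum_univ_three, Real.norm_eq_abs, sq_abs]
  have h2 : (riemannProj z 0 - riemannProj w 0) ^ 2 + (riemannProj z 1 - riemannProj w 1) ^ 2 +
      (riemannProj z 2 - riemannProj w 2) ^ 2
      = ‖z - w‖ ^ 2 / ((1 + ‖z‖ ^ 2) * (1 + ‖w‖ ^ 2)) := by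
    show (z.re / (1 + ‖z‖ ^ 2) - w.re / (1 + ‖w‖ ^ 2))^2
      + (z.im / (1 + ‖z‖ ^ 2) - w.im / (1 + ‖w‖ ^ 2))^2
      + (‖z‖ ^ 2 / (1 + ‖z‖ ^ 2) - ‖w‖ ^ 2 / (1 + ‖w‖ ^ 2))^2
      = _
    have e1 : ‖z‖ ^ 2 = z.re ^ 2 + z.im ^ 2 := by
      rw [Complex.sq_norm, Complex.normSq_apply]; ring
    have e2 : ‖w‖ ^ 2 = w.re ^ 2 + w.im ^ 2 := by
      rw [Complex.sq_norm, Complex.normSq_apply]; ring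
    have e3 : ‖z - w‖ ^ 2 = (z.re - w.re) ^ 2 + (z.im - w.im) ^ 2 := by
      rw [Complex.sq_norm, Complex.normSq_apply, Complex.sub_re, Complex.sub_im]; ring
    rw [e1, e2, e3]
    have h1 : (1 : ℝ) + (z.re ^ 2 + z.im ^ 2) ≠ 0 := by positivity
    have h2 : (1 : ℝ) + (w.re ^ 2 + w.im ^ 2) ≠ 0 := by positivity
    field_simp
    ring
  rw [h2, Real.sqrt_div (sq_nonneg _), Real.sqrt_sq (norm_nonneg _),
    Real.sqrt_mul hA.le]

lemma sum_pairs {N : ℕ} (g : Fin N → Fin N → ℝ) (hg : ∀ i j, g i j = g j i) :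
    2 * ∑ p ∈ Finset.univ.filter (fun p : Fin N × Fin N => p.1 < p.2), g p.1 p.2
      = ∑ i : Fin N, ∑ j ∈ Finset.univ.erase i, g i j := by
  have hswap : ∑ p ∈ Finset.univ.filter (fun p : Fin N × Fin N => p.1 < p.2), g p.1 p.2
      = ∑ p ∈ Finset.univ.filter (fun p : Fin N × Fin N => p.2 < p.1), g p.1 p.2 := by
    apply Finset.sum_nbij' (fun p => (p.2, p.1)) (fun p => (p.2, p.1)) <;>
      simp [hg _ _]
  have hinner : ∀ i : Fin N, ∑ j ∈ Finset.univ.erase i, g i j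
      = ∑ j : Fin N, if i ≠ j then g i j else 0 := by
    intro i
    rw [← Finset.filter_ne (Finset.univ) i, Finset.sum_filter]
  have hne : ∑ i : Fin N, ∑ j ∈ Finset.univ.erase i, g i j
      = ∑ p : Fin N × Fin N, if p.1 ≠ p.2 then g p.1 p.2 else 0 := by
    rw [Fintype.sum_prod_type]
    simp only [hinner]
  rw [hne]
  rw [two_mul]
  nth_rewrite 2 [hswap]
  rw [Finset.sum_filter, Finset.sum_filter, ← Finset.sum_add_distrib]
  apply Finset.sum_congr rfl
  intro p _
  rcases lt_trichotomy p.1 p.2 with h | h | h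
  · simp [h, h.ne, not_lt_of_gt h]
  · simp [h]
  · simp [h, h.ne', not_lt_of_gt h]

lemma sum_pairs_add {N : ℕ} (f : Fin N → ℝ) :
    ∑ p ∈ Finset.univ.filter (fun p : Fin N × Fin N => p.1 < p.2), (f p.1 + f p.2)
      = ((N:ℝ) - 1) * ∑ i : Fin N, f i := by
  have h := sum_pairs (fun i j => f i + f j) (fun i j => by ring)
  rcases Nat.eq_zero_or_pos N with hN | hN
  · subst hN; simp
  · have h2 : ∀ i : Fin N, ∑ j ∈ Finset.univ.erase i, (f i + f j)
        = ((N:ℝ) - 1) * f i + (∑ j : Fin N, f j - f i) := by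
      intro i
      rw [Finset.sum_add_distrib, Finset.sum_const, Finset.card_erase_of_mem (Finset.mem_univ i),
        Finset.card_univ, Fintype.card_fin, Finset.sum_erase_eq_sub (Finset.mem_univ i),
        nsmul_eq_mul, Nat.cast_sub hN, Nat.cast_one]
    simp only [h2, Finset.sum_add_distrib, Finset.sum_sub_distrib, Finset.sum_const,
      Finset.card_univ, Fintype.card_fin, nsmul_eq_mul, ← Finset.mul_sum] at h
    rw [Finset.sum_add_distrib]
    linarith [h]

lemma deriv_eval {N : ℕ} (a : ℂ) (z : Fin N → ℂ) (hz : Function.Injective z) (i : Fin N) :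
    (Polynomial.derivative (C a * ∏ j : Fin N, (X - C (z j)))).eval (z i)
      = a * ∏ j ∈ Finset.univ.erase i, (z i - z j) := by
  rw [derivative_C_mul, eval_mul, eval_C]
  congr 1
  have hprod : (∏ j : Fin N, (X - C (z j)))
      = (Multiset.map (fun a => X - C a) (Finset.univ.val.map z)).prod := by
    rw [Multiset.map_map]
    rfl
  have hmem : z i ∈ Finset.univ.val.map z := Multiset.mem_map.2 ⟨i, Finset.mem_univ i, rfl⟩
  rw [hprod, eval_multiset_prod_X_sub_C_derivative hmem]
  rw [← Multiset.map_erase z hz, Multiset.map_map]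
  rw [show (Finset.univ.val.erase i) = (Finset.univ.erase i).val from (Finset.erase_val _ _).symm]
  rfl

/-- For a degree-`N` polynomial `p` with leading coefficient `a ≠ 0` and
distinct (hence simple) roots `z 1, …, z N`, the logarithmic energy of the
stereographic projections of the roots onto the Riemann sphere decomposes
in terms of `|p'(z i)|` and `|a|`. -/
theorem logEnergy_roots_formula (N : ℕ) (a : ℂ) (ha : a ≠ 0)
    (z : Fin N → ℂ) (hz : Function.Injective z)
    (p : Polynomial ℂ) (hp : p = C a * ∏ i : Fin N, (X - C (z i))) :
    logEnergy (fun i => riemannProj (z i))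
      = (N - 1) * ∑ i : Fin N, Real.log (Real.sqrt (1 + ‖z i‖ ^ 2))
        - 1 / 2 * ∑ i : Fin N, Real.log ‖(Polynomial.derivative p).eval (z i)‖
        + N / 2 * Real.log ‖a‖ := by
  set f : Fin N → ℝ := fun i => Real.log (Real.sqrt (1 + ‖z i‖ ^ 2)) with hf
  set g : Fin N → Fin N → ℝ := fun i j => Real.log (‖z i - z j‖) with hgdef
  have hgsymm : ∀ i j, g i j = g j i := fun i j => by
    simp only [hgdef]; rw [norm_sub_rev]
  have habs_ne : ∀ i j : Fin N, i ≠ j → ‖z i - z j‖ ≠ 0 := by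
    intro i j hij
    exact norm_ne_zero_iff.mpr (sub_ne_zero.2 fun h => hij (hz h))
  have hsqrt_ne : ∀ i : Fin N, Real.sqrt (1 + ‖z i‖ ^ 2) ≠ 0 := by
    intro i
    have : (0:ℝ) < 1 + ‖z i‖ ^ 2 := by positivity
    positivity
  -- Step 1: rewrite logEnergy
  have step1 : logEnergy (fun i => riemannProj (z i))
      = ∑ p ∈ Finset.univ.filter (fun p : Fin N × Fin N => p.1 < p.2), (f p.1 + f p.2)
        - ∑ p ∈ Finset.univ.filter (fun p : Fin N × Fin N => p.1 < p.2), g p.1 p.2 := by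
    rw [logEnergy, ← Finset.sum_sub_distrib, ← Finset.sum_neg_distrib]
    apply Finset.sum_congr rfl
    intro q hq
    have hlt : q.1 < q.2 := (Finset.mem_filter.1 hq).2
    rw [riemannProj_dist, Real.log_div (habs_ne _ _ hlt.ne)
      (mul_ne_zero (hsqrt_ne q.1) (hsqrt_ne q.2)),
      Real.log_mul (hsqrt_ne q.1) (hsqrt_ne q.2)]
    ring
  -- Step 3: derivative sum
  have step3 : ∑ i : Fin N, Real.log (‖(Polynomial.derivative p).eval (z i)‖)
      = N * Real.log (‖a‖)
        + 2 * ∑ p ∈ Finset.univ.filter (fun p : Fin N × Fin N => p.1 < p.2), g p.1 p.2 := by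
    rw [sum_pairs g hgsymm]
    have : ∀ i : Fin N, Real.log (‖(Polynomial.derivative p).eval (z i)‖)
        = Real.log (‖a‖) + ∑ j ∈ Finset.univ.erase i, g i j := by
      intro i
      rw [hp, deriv_eval a z hz i, norm_mul, norm_prod,
        Real.log_mul (norm_ne_zero_iff.mpr ha) ?_, Real.log_prod]
      · intro j hj
        exact habs_ne i j (fun h => (Finset.mem_erase.1 hj).1 h.symm)
      · exact Finset.prod_ne_zero_iff.2 fun j hj =>
          habs_ne i j (fun h => (Finset.mem_erase.1 hj).1 h.symm)
    simp only [this]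
    rw [Finset.sum_add_distrib, Finset.sum_const, Finset.card_univ, Fintype.card_fin,
      nsmul_eq_mul]
  rw [step1, step3, sum_pairs_add f]
  ring
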